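/- For all complex numbers \lambda_1, \lambda_2, \lambda_3, the iterated contour integral over the unit torus satisfies (1/(2\pi i)^2) \oint_{|x_1|=1} \oint_{|x_2|=1} \exp(\lambda_1 x_1 + \lambda_2 x_2 + \lambda_3/(x_1 x_2)) \, (dx_2/x_2)(dx_1/x_1) = \sum_{m=0}^{\infty} (\lambda_1 \lambda_2 \lambda_3)^m / (m!)^3. -/

import Mathlib

open Complex Metric MeasureTheory

lemma circleIntegral_tsum {F : ℕ → ℂ → ℂ} {b : ℕ → ℝ}
    (hcont : ∀ n, ContinuousOn (F n) (sphere (0:ℂ) 1))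
    (hb : Summable b)
    (hFb : ∀ n, ∀ z ∈ sphere (0:ℂ) 1, ‖F n z‖ ≤ b n) :
    (∮ z in C(0, 1), ∑' n, F n z) = ∑' n, ∮ z in C(0, 1), F n z := by
  have h2pi : (0:ℝ) ≤ 2 * Real.pi := by positivity
  have hG : ∀ n, IntegrableOn
      (fun θ : ℝ => deriv (circleMap 0 1) θ • F n (circleMap 0 1 θ)) (Set.Ioc 0 (2*Real.pi)) := by
    intro n
    have : CircleIntegrable (F n) 0 1 := (hcont n).circleIntegrable zero_le_one
    exact ((circleIntegrable_iff 1).1 this).1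
  have hnorm : ∀ n θ, ‖deriv (circleMap 0 1) θ • F n (circleMap 0 1 θ)‖ ≤ b n := by
    intro n θ
    rw [norm_smul]
    have h1 : ‖deriv (circleMap 0 1) θ‖ = 1 := by
      simp [deriv_circleMap]
    rw [h1, one_mul]
    exact hFb n _ (circleMap_mem_sphere _ zero_le_one _)
  have hbnn : ∀ n, 0 ≤ b n := fun n =>
    le_trans (norm_nonneg _) (hFb n _ (circleMap_mem_sphere (0:ℂ) zero_le_one 0))
  have key := integral_tsum_of_summable_integral_norm (μ := volume.restrict (Set.Ioc 0 (2*Real.pi)))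
    (F := fun n θ => deriv (circleMap 0 1) θ • F n (circleMap 0 1 θ)) hG ?_
  · simp only [circleIntegral, intervalIntegral.integral_of_le h2pi]
    rw [show (fun θ => deriv (circleMap 0 1) θ • ∑' n, F n (circleMap 0 1 θ))
        = fun θ => ∑' n, deriv (circleMap 0 1) θ • F n (circleMap 0 1 θ) from
        funext fun θ => (tsum_const_smul'' _).symm, ← key]
  · apply Summable.of_nonneg_of_le (fun n => integral_nonneg (fun θ => norm_nonneg _))
      (fun n => ?_) (hb.mul_left (2 * Real.pi))
    have h1 : ‖∫ θ in Set.Ioc 0 (2*Real.pi), ‖deriv (circleMap 0 1) θ • F n (circleMap 0 1 θ)‖‖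
        ≤ b n * (volume (Set.Ioc (0:ℝ) (2*Real.pi))).toReal := by
      apply norm_setIntegral_le_of_norm_le_const measure_Ioc_lt_top
      · intro θ _
        rw [Real.norm_of_nonneg (norm_nonneg _)]; exact hnorm n θ
    rw [Real.norm_of_nonneg (integral_nonneg (fun θ => norm_nonneg _))] at h1
    refine h1.trans (le_of_eq ?_)
    rw [Real.volume_Ioc, ENNReal.toReal_ofReal (by linarith)]
    ring

lemma exp_tsum_eq (z : ℂ) : Complex.exp z = ∑' n : ℕ, z ^ n / n.factorial := by
  rw [Complex.exp_eq_exp_ℂ, NormedSpace.exp_eq_tsum_div]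

lemma norm_exp_le_exp_norm (z : ℂ) : ‖Complex.exp z‖ ≤ Real.exp ‖z‖ := by
  rw [Complex.norm_exp]
  exact Real.exp_le_exp.2 (Complex.re_le_norm z)

lemma circleIntegral_exp_mul_zpow (a : ℂ) (m : ℕ) :
    (∮ z in C(0, 1), Complex.exp (a * z) * z ^ (-(m + 1 : ℕ) : ℤ))
      = 2 * Real.pi * Complex.I * a ^ m / m.factorial := by
  have key := circleIntegral_tsum (F := fun n z => (a ^ n / n.factorial) * z ^ ((n : ℤ) - (m + 1)))
    (b := fun n => ‖a‖ ^ n / n.factorial) ?_ ?_ ?_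
  · have h1 : (∮ z in C(0, 1), Complex.exp (a * z) * z ^ (-(m + 1 : ℕ) : ℤ))
        = ∮ z in C(0, 1), ∑' n : ℕ, (a ^ n / n.factorial) * z ^ ((n : ℤ) - (m + 1)) := by
      apply circleIntegral.integral_congr zero_le_one
      intro z hz
      have hz0 : z ≠ 0 := by intro h; simp [h] at hz
      beta_reduce
      rw [exp_tsum_eq, ← tsum_mul_right]
      congr 1; funext n
      have hzp : z ^ ((n : ℤ) - (m + 1)) = z ^ n * z ^ (-(m + 1 : ℕ) : ℤ) := by
        rw [← zpow_natCast z n, ← zpow_add₀ hz0]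
        norm_num
        congr 1; ring
      rw [hzp, mul_pow]; ring
    rw [h1, key]
    rw [tsum_eq_single m ?_]
    · have hm : ((m : ℤ) - (m + 1)) = -1 := by ring
      beta_reduce
      rw [hm, circleIntegral.integral_const_mul]
      have h2 : (∮ z in C(0, 1), z ^ (-1 : ℤ)) = 2 * Real.pi * Complex.I := by
        have h3 : Set.EqOn (fun z : ℂ => z ^ (-1 : ℤ)) (fun z : ℂ => (z - 0)⁻¹)
            (sphere (0:ℂ) 1) := by
          intro z _; simp [zpow_neg_one]
        rw [circleIntegral.integral_congr zero_le_one h3,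
          circleIntegral.integral_sub_inv_of_mem_ball (by simp)]
      rw [h2]; ring
    · intro n hn
      have hne : ((n : ℤ) - (m + 1)) ≠ -1 := by
        intro h
        apply hn
        have : (n : ℤ) = m := by linarith [h]
        exact_mod_cast this
      beta_reduce
      rw [circleIntegral.integral_const_mul]
      have h3 : Set.EqOn (fun z : ℂ => z ^ ((n : ℤ) - (m + 1)))
          (fun z : ℂ => (z - 0) ^ ((n : ℤ) - (m + 1))) (sphere (0:ℂ) 1) := by
        intro z _; simp
      rw [circleIntegral.integral_congr zero_le_one h3,
        circleIntegral.integral_sub_zpow_of_ne hne, mul_zero]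
  · intro n
    apply ContinuousOn.mul continuousOn_const
    intro z hz
    have hz0 : z ≠ 0 := by
      intro h; simp [h] at hz
    exact ((continuousAt_zpow₀ _ _ (Or.inl hz0)).continuousWithinAt)
  · exact Real.summable_pow_div_factorial ‖a‖
  · intro n z hz
    have hz1 : ‖z‖ = 1 := by simpa using hz
    rw [norm_mul, norm_zpow, hz1, one_zpow, mul_one, norm_div]
    simp

lemma inner_circle (l₁ l₂ l₃ : ℂ) (x₁ : ℂ) (hx : x₁ ≠ 0) :
    (∮ x₂ in C(0, 1), Complex.exp (l₁ * x₁ + l₂ * x₂ + l₃ / (x₁ * x₂)) / x₂)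
      = 2 * Real.pi * Complex.I * Complex.exp (l₁ * x₁) *
        ∑' m : ℕ, (l₂ * l₃) ^ m * x₁ ^ (-(m : ℤ)) / ((m.factorial : ℂ)) ^ 2 := by
  set A := Complex.exp (l₁ * x₁) with hA
  set c := l₃ / x₁ with hc
  have key := circleIntegral_tsum
    (F := fun m x₂ => (A * (c ^ m / m.factorial)) * (Complex.exp (l₂ * x₂) * x₂ ^ (-(m + 1 : ℕ) : ℤ)))
    (b := fun m => (‖A‖ * Real.exp ‖l₂‖) * (‖c‖ ^ m / m.factorial)) ?_ ?_ ?_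
  · have h1 : (∮ x₂ in C(0, 1), Complex.exp (l₁ * x₁ + l₂ * x₂ + l₃ / (x₁ * x₂)) / x₂)
        = ∮ x₂ in C(0, 1), ∑' m : ℕ,
            (A * (c ^ m / m.factorial)) * (Complex.exp (l₂ * x₂) * x₂ ^ (-(m + 1 : ℕ) : ℤ)) := by
      apply circleIntegral.integral_congr zero_le_one
      intro x₂ hx₂
      have hx₂0 : x₂ ≠ 0 := by intro h; simp [h] at hx₂
      beta_reduce
      have hsplit : l₃ / (x₁ * x₂) = c / x₂ := by rw [hc, div_div]
      rw [hsplit, Complex.exp_add, Complex.exp_add, exp_tsum_eq (c / x₂), ← hA]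
      rw [mul_assoc, ← tsum_mul_left, ← tsum_mul_left, ← tsum_div_const]
      congr 1; funext m
      have hzp : x₂ ^ (-(m + 1 : ℕ) : ℤ) = (x₂ ^ m * x₂)⁻¹ := by
        rw [zpow_neg, zpow_natCast, pow_succ]
      rw [hzp, div_pow]
      field_simp
    rw [h1, key]
    have h2 : ∀ m : ℕ, (∮ x₂ in C(0, 1),
        (A * (c ^ m / m.factorial)) * (Complex.exp (l₂ * x₂) * x₂ ^ (-(m + 1 : ℕ) : ℤ)))
        = (A * (c ^ m / m.factorial)) * (2 * Real.pi * Complex.I * l₂ ^ m / m.factorial) := by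
      intro m
      rw [circleIntegral.integral_const_mul, circleIntegral_exp_mul_zpow]
    calc ∑' m : ℕ, (∮ x₂ in C(0, 1),
          (A * (c ^ m / m.factorial)) * (Complex.exp (l₂ * x₂) * x₂ ^ (-(m + 1 : ℕ) : ℤ)))
        = ∑' m : ℕ, (2 * Real.pi * Complex.I * A) *
            ((l₂ * l₃) ^ m * x₁ ^ (-(m : ℤ)) / ((m.factorial : ℂ)) ^ 2) := by
          apply tsum_congr
          intro m
          rw [h2 m, hc]
          have hxm : x₁ ^ (-(m : ℤ)) = (x₁ ^ m)⁻¹ := by rw [zpow_neg, zpow_natCast]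
          rw [hxm, div_pow, mul_pow]
          have hfac : ((m.factorial : ℂ)) ≠ 0 := Nat.cast_ne_zero.2 m.factorial_ne_zero
          field_simp
      _ = 2 * Real.pi * Complex.I * A *
            ∑' m : ℕ, (l₂ * l₃) ^ m * x₁ ^ (-(m : ℤ)) / ((m.factorial : ℂ)) ^ 2 :=
        tsum_mul_left
  · intro m
    apply ContinuousOn.mul continuousOn_const
    apply ContinuousOn.mul
    · exact (Complex.continuous_exp.comp (continuous_const.mul continuous_id)).continuousOn
    · intro z hz
      have hz0 : z ≠ 0 := by intro h; simp [h] at hz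
      exact (continuousAt_zpow₀ _ _ (Or.inl hz0)).continuousWithinAt
  · exact ((Real.summable_pow_div_factorial ‖c‖).mul_left _)
  · intro m z hz
    have hz1 : ‖z‖ = 1 := by simpa using hz
    rw [norm_mul, norm_mul, norm_mul, norm_zpow, hz1, one_zpow, mul_one, norm_div, norm_pow]
    have he : ‖Complex.exp (l₂ * z)‖ ≤ Real.exp ‖l₂‖ := by
      refine (_root_.norm_exp_le_exp_norm _).trans (Real.exp_le_exp.2 ?_)
      rw [norm_mul, hz1, mul_one]
    simp only [Complex.norm_natCast]
    calc ‖A‖ * (‖c‖ ^ m / (m.factorial : ℝ)) * ‖Complex.exp (l₂ * z)‖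
        ≤ ‖A‖ * (‖c‖ ^ m / (m.factorial : ℝ)) * Real.exp ‖l₂‖ := by
          apply mul_le_mul_of_nonneg_left he (by positivity)
      _ = ‖A‖ * Real.exp ‖l₂‖ * (‖c‖ ^ m / (m.factorial : ℝ)) := by ring

lemma summable_aux {r : ℝ} (hr : 0 ≤ r) :
    Summable (fun m : ℕ => r ^ m / ((m.factorial : ℝ)) ^ 2) := by
  apply Summable.of_nonneg_of_le (fun m => by positivity)
    (fun m => ?_) (Real.summable_pow_div_factorial r)
  have h1 : (1 : ℝ) ≤ (m.factorial : ℝ) := by exact_mod_cast m.factorial_pos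
  have h2 : (m.factorial : ℝ) ≤ ((m.factorial : ℝ)) ^ 2 := by nlinarith
  gcongr

theorem torus_exponential_period (l₁ l₂ l₃ : ℂ) :
    (1 / (2 * (Real.pi : ℂ) * Complex.I) ^ 2) *
      (∮ x₁ in C(0, 1), (∮ x₂ in C(0, 1),
        Complex.exp (l₁ * x₁ + l₂ * x₂ + l₃ / (x₁ * x₂)) / x₂) / x₁)
    = ∑' m : ℕ, (l₁ * l₂ * l₃) ^ m / (m.factorial : ℂ) ^ 3 := by
  have h2pi : ((2 : ℂ) * Real.pi * Complex.I) ≠ 0 := by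
    simp [Real.pi_ne_zero, Complex.I_ne_zero, Complex.ofReal_ne_zero]
  have key := circleIntegral_tsum
    (F := fun m x₁ => (2 * (Real.pi : ℂ) * Complex.I * ((l₂ * l₃) ^ m / ((m.factorial : ℂ)) ^ 2)) *
      (Complex.exp (l₁ * x₁) * x₁ ^ (-(m + 1 : ℕ) : ℤ)))
    (b := fun m => (2 * Real.pi * Real.exp ‖l₁‖) * (‖l₂ * l₃‖ ^ m / ((m.factorial : ℝ)) ^ 2))
    ?_ ?_ ?_
  · have h1 : (∮ x₁ in C(0, 1), (∮ x₂ in C(0, 1),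
          Complex.exp (l₁ * x₁ + l₂ * x₂ + l₃ / (x₁ * x₂)) / x₂) / x₁)
        = ∮ x₁ in C(0, 1), ∑' m : ℕ,
            (2 * (Real.pi : ℂ) * Complex.I * ((l₂ * l₃) ^ m / ((m.factorial : ℂ)) ^ 2)) *
              (Complex.exp (l₁ * x₁) * x₁ ^ (-(m + 1 : ℕ) : ℤ)) := by
      apply circleIntegral.integral_congr zero_le_one
      intro x₁ hx₁
      have hx₁0 : x₁ ≠ 0 := by intro h; simp [h] at hx₁
      beta_reduce
      rw [inner_circle l₁ l₂ l₃ x₁ hx₁0]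
      rw [← tsum_mul_left, ← tsum_div_const]
      congr 1; funext m
      have hzp : x₁ ^ (-(m + 1 : ℕ) : ℤ) = (x₁ ^ m * x₁)⁻¹ := by
        rw [zpow_neg, zpow_natCast, pow_succ]
      have hxm : x₁ ^ (-(m : ℤ)) = (x₁ ^ m)⁻¹ := by rw [zpow_neg, zpow_natCast]
      rw [hzp, hxm]
      field_simp
    rw [h1, key]
    have h2 : ∀ m : ℕ, (∮ x₁ in C(0, 1),
        (2 * (Real.pi : ℂ) * Complex.I * ((l₂ * l₃) ^ m / ((m.factorial : ℂ)) ^ 2)) *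
          (Complex.exp (l₁ * x₁) * x₁ ^ (-(m + 1 : ℕ) : ℤ)))
        = (2 * (Real.pi : ℂ) * Complex.I) ^ 2 * ((l₁ * l₂ * l₃) ^ m / (m.factorial : ℂ) ^ 3) := by
      intro m
      rw [circleIntegral.integral_const_mul, circleIntegral_exp_mul_zpow]
      have hfac : ((m.factorial : ℂ)) ≠ 0 := Nat.cast_ne_zero.2 m.factorial_ne_zero
      field_simp
      ring
    rw [tsum_congr h2, tsum_mul_left, ← mul_assoc, one_div,
      inv_mul_cancel₀ (pow_ne_zero 2 h2pi), one_mul]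
  · intro m
    apply ContinuousOn.mul continuousOn_const
    apply ContinuousOn.mul
    · exact (Complex.continuous_exp.comp (continuous_const.mul continuous_id)).continuousOn
    · intro z hz
      have hz0 : z ≠ 0 := by intro h; simp [h] at hz
      exact (continuousAt_zpow₀ _ _ (Or.inl hz0)).continuousWithinAt
  · exact ((summable_aux (norm_nonneg (l₂ * l₃))).mul_left _)
  · intro m z hz
    have hz1 : ‖z‖ = 1 := by simpa using hz
    have he : ‖Complex.exp (l₁ * z)‖ ≤ Real.exp ‖l₁‖ := by
      refine (_root_.norm_exp_le_exp_norm _).trans (Real.exp_le_exp.2 ?_)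
      rw [norm_mul, hz1, mul_one]
    have hnorm1 : ‖(2 : ℂ) * Real.pi * Complex.I‖ = 2 * Real.pi := by
      simp [abs_of_pos Real.pi_pos]
    have hnorm2 : ‖(l₂ * l₃) ^ m / ((m.factorial : ℂ)) ^ 2‖
        = ‖l₂ * l₃‖ ^ m / ((m.factorial : ℝ)) ^ 2 := by
      rw [norm_div, norm_pow, norm_pow]
      norm_num
    have hnorm3 : ‖Complex.exp (l₁ * z) * z ^ (-(m + 1 : ℕ) : ℤ)‖ ≤ Real.exp ‖l₁‖ := by
      rw [norm_mul, norm_zpow, hz1, one_zpow, mul_one]; exact he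
    beta_reduce
    rw [norm_mul, norm_mul, hnorm1, hnorm2]
    calc 2 * Real.pi * (‖l₂ * l₃‖ ^ m / ((m.factorial : ℝ)) ^ 2) *
          ‖Complex.exp (l₁ * z) * z ^ (-(m + 1 : ℕ) : ℤ)‖
        ≤ 2 * Real.pi * (‖l₂ * l₃‖ ^ m / ((m.factorial : ℝ)) ^ 2) * Real.exp ‖l₁‖ := by
          apply mul_le_mul_of_nonneg_left hnorm3 (by positivity)
      _ = 2 * Real.pi * Real.exp ‖l₁‖ * (‖l₂ * l₃‖ ^ m / ((m.factorial : ℝ)) ^ 2) := by ring
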